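/- Let κ_d denote the number of labeled directed acyclic graphs on d nodes. Then κ_d satisfies the recurrence κ_d = Σ_{i=1}^{d} (−1)^{i+1} · C(d,i) · 2^{i(d−i)} · κ_{d−i}, with κ_0 = 1. In particular κ_1 = 1, κ_2 = 3, κ_3 = 25. -/

import Mathlib

/-- The number of labeled directed acyclic graphs on `d` nodes: adjacency functions
`A : Fin d → Fin d → Bool` whose edge relation has no directed cycle. -/
noncomputable def numLabeledDAGs (d : ℕ) : ℕ :=
  Nat.card {A : Fin d → Fin d → Bool //
    ∀ i : Fin d, ¬ Relation.TransGen (fun a b => A a b = true) i i}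

open Finset

private lemma dagCard_congr {α β : Type*} (e : α ≃ β) :
    Nat.card {A : α → α → Bool // ∀ i, ¬ Relation.TransGen (fun a b => A a b = true) i i} =
    Nat.card {A : β → β → Bool // ∀ i, ¬ Relation.TransGen (fun a b => A a b = true) i i} := by
  apply Nat.card_congr
  refine Equiv.subtypeEquiv (Equiv.arrowCongr e (Equiv.arrowCongr e (Equiv.refl Bool))) ?_
  intro A
  have hmap : ∀ x y : β, (e.arrowCongr (e.arrowCongr (Equiv.refl Bool))) A x y
      = A (e.symm x) (e.symm y) := by intro x y; rfl
  constructor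
  · intro hA j hj
    refine hA (e.symm j) ?_
    have := Relation.TransGen.lift (p := fun a b => A a b = true) e.symm
      (fun x y (h : (e.arrowCongr (e.arrowCongr (Equiv.refl Bool))) A x y = true) => by
        rw [hmap] at h; exact h) _ _ hj
    exact this
  · intro hA j hj
    refine hA (e j) ?_
    exact Relation.TransGen.lift (p := fun a b => (e.arrowCongr (e.arrowCongr (Equiv.refl Bool))) A a b = true) e
      (fun x y (h : A x y = true) => by simp only [Function.onFun]; rw [hmap]; simpa using h) _ _ hj

private lemma transGen_restrict {d : ℕ} {A : Fin d → Fin d → Bool} {S : Finset (Fin d)}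
    (hS : ∀ i ∈ S, ∀ j, A i j = false) {i j : Fin d}
    (h : Relation.TransGen (fun a b => A a b = true) i j) (hj : j ∉ S) :
    ∃ hi : i ∉ S, Relation.TransGen
      (fun a b : {x : Fin d // x ∉ S} => A a b = true) ⟨i, hi⟩ ⟨j, hj⟩ := by
  induction h with
  | single hik =>
    rename_i k
    have hi : i ∉ S := fun hiS => by simp [hS i hiS] at hik
    exact ⟨hi, Relation.TransGen.single hik⟩
  | tail hab hbc ih =>
    rename_i b c
    have hb : b ∉ S := fun hbS => by simp [hS b hbS] at hbc
    obtain ⟨hi, ht⟩ := ih hb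
    exact ⟨hi, Relation.TransGen.tail ht hbc⟩

private lemma card_sinked {d : ℕ} (S : Finset (Fin d)) :
    Nat.card {A : Fin d → Fin d → Bool //
        (∀ i, ¬ Relation.TransGen (fun a b => A a b = true) i i) ∧
        ∀ i ∈ S, ∀ j, A i j = false} =
      2 ^ (S.card * (d - S.card)) * numLabeledDAGs (d - S.card) := by
  classical
  have key : Nat.card {A : Fin d → Fin d → Bool //
        (∀ i, ¬ Relation.TransGen (fun a b => A a b = true) i i) ∧
        ∀ i ∈ S, ∀ j, A i j = false} =
      Nat.card (({x : Fin d // x ∉ S} → {x : Fin d // x ∈ S} → Bool) ×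
        {B : {x : Fin d // x ∉ S} → {x : Fin d // x ∉ S} → Bool //
          ∀ i, ¬ Relation.TransGen (fun a b => B a b = true) i i}) := by
    apply Nat.card_congr
    refine
      { toFun := fun A =>
          ⟨fun a s => A.1 a s,
           ⟨fun a b => A.1 a b, ?_⟩⟩
        invFun := fun P =>
          ⟨fun i j => if hi : i ∈ S then false else
              if hj : j ∈ S then P.1 ⟨i, hi⟩ ⟨j, hj⟩ else P.2.1 ⟨i, hi⟩ ⟨j, hj⟩, ?_, ?_⟩
        left_inv := ?_
        right_inv := ?_ }
    · intro i hcyc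
      exact A.2.1 i (Relation.TransGen.lift (p := fun a b => A.1 a b = true)
        Subtype.val (fun a b h => h) _ _ hcyc)
    · intro i hcyc
      set A' : Fin d → Fin d → Bool := fun i j => if hi : i ∈ S then false else
        if hj : j ∈ S then P.1 ⟨i, hi⟩ ⟨j, hj⟩ else P.2.1 ⟨i, hi⟩ ⟨j, hj⟩ with hA'
      have hrows : ∀ i ∈ S, ∀ j, A' i j = false := by
        intro i hi j; simp [hA', hi]
      by_cases hi : i ∈ S
      · obtain ⟨b, hb, -⟩ := Relation.TransGen.head'_iff.1 hcyc
        simp [hrows i hi b] at hb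
      · obtain ⟨hi', ht⟩ := transGen_restrict hrows hcyc hi
        refine P.2.2 ⟨i, hi⟩ (Relation.TransGen.mono ?_ _ _ ht)
        intro a b hab
        have : A' a b = true := hab
        rw [hA'] at this
        simpa [dif_neg a.2, dif_neg b.2] using this
    · intro i hi j; simp [hi]
    · rintro ⟨A, hA, hrow⟩
      apply Subtype.ext
      funext i j
      by_cases hi : i ∈ S
      · simp [hi, (hrow i hi j)]
      · by_cases hj : j ∈ S <;> simp [hi, hj]
    · rintro ⟨C, B, hB⟩
      refine Prod.ext ?_ (Subtype.ext ?_)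
      · funext a s
        simp [dif_neg a.2, dif_pos s.2]
      · funext a b
        simp [dif_neg a.2, dif_neg b.2]
  rw [key, Nat.card_prod]
  have h1 : Fintype.card {x : Fin d // x ∈ S} = S.card := Fintype.card_coe S
  have h2 : Fintype.card {x : Fin d // x ∉ S} = d - S.card := by
    rw [Fintype.card_subtype_compl, Fintype.card_fin, h1]
  have h3 : Nat.card ({x : Fin d // x ∉ S} → {x : Fin d // x ∈ S} → Bool)
      = 2 ^ (S.card * (d - S.card)) := by
    rw [Nat.card_eq_fintype_card, Fintype.card_fun, Fintype.card_fun, h1, h2,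
      Fintype.card_bool, ← pow_mul, mul_comm]
  have h4 : Nat.card {B : {x : Fin d // x ∉ S} → {x : Fin d // x ∉ S} → Bool //
        ∀ i, ¬ Relation.TransGen (fun a b => B a b = true) i i} = numLabeledDAGs (d - S.card) := by
    rw [numLabeledDAGs]
    exact dagCard_congr (Fintype.equivFinOfCardEq h2)
  rw [h3, h4]

private lemma exists_sink {d : ℕ} (hd : 1 ≤ d) (A : Fin d → Fin d → Bool)
    (hA : ∀ i, ¬ Relation.TransGen (fun a b => A a b = true) i i) :
    ∃ m : Fin d, ∀ j, A m j = false := by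
  have : Nonempty (Fin d) := ⟨⟨0, hd⟩⟩
  let r : Fin d → Fin d → Prop := fun a b => Relation.TransGen (fun x y => A x y = true) b a
  have htrans : IsTrans (Fin d) r := ⟨fun a b c hab hbc => hbc.trans hab⟩
  have hirrefl : IsIrrefl (Fin d) r := ⟨fun a h => hA a h⟩
  obtain ⟨m, -, hm⟩ := (Finite.wellFounded_of_trans_of_irrefl r).has_min Set.univ
    ⟨Classical.arbitrary _, trivial⟩
  refine ⟨m, fun j => ?_⟩
  by_contra h
  exact hm j trivial (Relation.TransGen.single (by simpa using h))

private lemma ie_sum {α : Type*} [DecidableEq α] (T : Finset α) (hT : T.Nonempty) :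
    ∑ S ∈ T.powerset, (if S = ∅ then 0 else (-1:ℤ)^(S.card+1)) = 1 := by
  have h0 : ∑ S ∈ T.powerset, (-1:ℤ)^S.card = 0 := by
    rw [Finset.sum_powerset_neg_one_pow_card, if_neg hT.ne_empty]
  have h1 : ∑ S ∈ T.powerset, (if S = ∅ then 0 else (-1:ℤ)^(S.card+1))
      = ∑ S ∈ T.powerset, (-((-1:ℤ)^S.card) + (if S = ∅ then 1 else 0)) := by
    refine Finset.sum_congr rfl fun S _ => ?_
    by_cases h : S = ∅
    · simp [h]
    · simp [h, pow_succ]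
  rw [h1, Finset.sum_add_distrib, Finset.sum_neg_distrib, h0, neg_zero, zero_add,
    Finset.sum_ite_eq' T.powerset (∅ : Finset α) (fun _ => (1:ℤ))]
  simp

private noncomputable def gAux (d : ℕ) (i : ℕ) : ℤ :=
  if i = 0 then 0 else (-1:ℤ)^(i+1) * 2^(i*(d-i)) * (numLabeledDAGs (d - i) : ℤ)

private lemma recurrence (d : ℕ) (hd : 1 ≤ d) :
    (numLabeledDAGs d : ℤ) =
      ∑ i ∈ Finset.Icc 1 d,
        (-1 : ℤ) ^ (i + 1) * (d.choose i) * 2 ^ (i * (d - i)) *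
          (numLabeledDAGs (d - i) : ℤ) := by
  classical
  obtain ⟨F, hF⟩ : ∃ F : Finset (Fin d → Fin d → Bool),
      F = univ.filter (fun A => ∀ i, ¬ Relation.TransGen (fun a b => A a b = true) i i) :=
    ⟨_, rfl⟩
  have hκ : numLabeledDAGs d = F.card := by
    rw [numLabeledDAGs, Nat.card_eq_fintype_card, Fintype.card_subtype, hF]
  have hN : ∀ S : Finset (Fin d),
      ((F.filter (fun A => ∀ i ∈ S, ∀ j, A i j = false)).card : ℤ)
        = 2 ^ (S.card * (d - S.card)) * (numLabeledDAGs (d - S.card) : ℤ) := by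
    intro S
    have h := card_sinked S
    rw [Nat.card_eq_fintype_card, Fintype.card_subtype] at h
    rw [hF, Finset.filter_filter]
    exact_mod_cast h
  -- now group by cardinality
  have hgroup :
      ∑ S ∈ (univ : Finset (Fin d)).powerset,
        (if S = ∅ then 0 else (-1:ℤ)^(S.card+1) *
          ((F.filter (fun A => ∀ i ∈ S, ∀ j, A i j = false)).card : ℤ))
        = ∑ i ∈ Finset.Icc 1 d,
            (-1 : ℤ) ^ (i + 1) * (d.choose i) * 2 ^ (i * (d - i)) *
              (numLabeledDAGs (d - i) : ℤ) := by
    have h1 : ∀ S ∈ (univ : Finset (Fin d)).powerset,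
        (if S = ∅ then 0 else (-1:ℤ)^(S.card+1) *
          ((F.filter (fun A => ∀ i ∈ S, ∀ j, A i j = false)).card : ℤ)) = gAux d S.card := by
      intro S _
      by_cases h : S = ∅
      · simp [h, gAux]
      · have hc : S.card ≠ 0 := by simpa [Finset.card_eq_zero] using h
        rw [if_neg h, hN S, gAux, if_neg hc]
        ring
    rw [Finset.sum_congr rfl h1, Finset.sum_powerset]
    have h2 : ∀ j ∈ Finset.range ((univ : Finset (Fin d)).card + 1),
        ∑ t ∈ Finset.powersetCard j (univ : Finset (Fin d)), gAux d t.card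
          = (d.choose j) • gAux d j := by
      intro j _
      rw [Finset.sum_powersetCard, Finset.card_univ, Fintype.card_fin]
    rw [Finset.sum_congr rfl h2, Finset.card_univ, Fintype.card_fin]
    have h3 : ∑ j ∈ Finset.range (d+1), d.choose j • gAux d j
        = ∑ j ∈ Finset.Icc 1 d, d.choose j • gAux d j := by
      refine (Finset.sum_subset (fun x hx => ?_) ?_).symm
      · simp only [Finset.mem_Icc] at hx
        simp only [Finset.mem_range]
        omega
      · intro x hx hx'
        have hx0 : x = 0 := by
          simp only [Finset.mem_range] at hx
          simp only [Finset.mem_Icc, not_and, not_le] at hx'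
          omega
        subst hx0
        simp [gAux]
    rw [h3]
    refine Finset.sum_congr rfl fun i hi => ?_
    have hi1 : i ≠ 0 := by
      simp only [Finset.mem_Icc] at hi; omega
    rw [gAux, if_neg hi1, nsmul_eq_mul]
    push_cast
    ring
  -- double counting
  have hmain :
      ∑ S ∈ (univ : Finset (Fin d)).powerset,
        (if S = ∅ then 0 else (-1:ℤ)^(S.card+1) *
          ((F.filter (fun A => ∀ i ∈ S, ∀ j, A i j = false)).card : ℤ))
        = (F.card : ℤ) := by
    have hterm : ∀ S ∈ (univ : Finset (Fin d)).powerset,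
        (if S = ∅ then 0 else (-1:ℤ)^(S.card+1) *
          ((F.filter (fun A => ∀ i ∈ S, ∀ j, A i j = false)).card : ℤ))
          = ∑ A ∈ F, (if S = ∅ then 0 else
              (-1:ℤ)^(S.card+1) * (if (∀ i ∈ S, ∀ j, A i j = false) then 1 else 0)) := by
      intro S _
      by_cases h : S = ∅
      · simp [h]
      · simp only [if_neg h]
        rw [Finset.card_filter]
        push_cast
        rw [Finset.mul_sum]
    rw [Finset.sum_congr rfl hterm, Finset.sum_comm]
    have hrow : ∀ A ∈ F,
        ∑ S ∈ (univ : Finset (Fin d)).powerset,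
          (if S = ∅ then 0 else
              (-1:ℤ)^(S.card+1) * (if (∀ i ∈ S, ∀ j, A i j = false) then 1 else 0)) = 1 := by
      intro A hA
      obtain ⟨T, hT⟩ : ∃ T : Finset (Fin d),
          T = univ.filter (fun i => ∀ j, A i j = false) := ⟨_, rfl⟩
      rw [hF] at hA
      have hTne : T.Nonempty := by
        obtain ⟨m, hm⟩ := exists_sink hd A (Finset.mem_filter.1 hA).2
        exact ⟨m, by simp [hT, hm]⟩
      have hsub : T.powerset ⊆ (univ : Finset (Fin d)).powerset := by
        intro S hS; simp
      have hvanish : ∀ S ∈ (univ : Finset (Fin d)).powerset, S ∉ T.powerset →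
          (if S = ∅ then 0 else
              (-1:ℤ)^(S.card+1) * (if (∀ i ∈ S, ∀ j, A i j = false) then 1 else 0)) = 0 := by
        intro S _ hS
        have hcond : ¬ (∀ i ∈ S, ∀ j, A i j = false) := by
          intro hc
          exact hS (Finset.mem_powerset.2 (fun i hi => by simp [hT, hc i hi]))
        have hne : S ≠ ∅ := by
          rintro rfl
          exact hcond (by simp)
        simp [hne, hcond]
      rw [← Finset.sum_subset hsub hvanish]
      have : ∀ S ∈ T.powerset,
          (if S = ∅ then 0 else
              (-1:ℤ)^(S.card+1) * (if (∀ i ∈ S, ∀ j, A i j = false) then 1 else 0))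
            = (if S = ∅ then 0 else (-1:ℤ)^(S.card+1)) := by
        intro S hS
        rw [hT] at hS
        have hc : ∀ i ∈ S, ∀ j, A i j = false := by
          intro i hi j
          exact (Finset.mem_filter.1 (Finset.mem_powerset.1 hS hi)).2 j
        rw [if_pos hc, mul_one]
      rw [Finset.sum_congr rfl this, ie_sum T hTne]
    rw [Finset.sum_congr rfl hrow]
    simp
  rw [hκ, ← hmain, hgroup]

theorem numLabeledDAGs_recurrence :
    numLabeledDAGs 0 = 1 ∧
    (∀ d : ℕ, 1 ≤ d →
      (numLabeledDAGs d : ℤ) =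
        ∑ i ∈ Finset.Icc 1 d,
          (-1 : ℤ) ^ (i + 1) * (d.choose i) * 2 ^ (i * (d - i)) *
            (numLabeledDAGs (d - i) : ℤ)) ∧
    numLabeledDAGs 1 = 1 ∧ numLabeledDAGs 2 = 3 ∧ numLabeledDAGs 3 = 25 := by
  have h0 : numLabeledDAGs 0 = 1 := by
    rw [numLabeledDAGs]
    rw [Nat.card_eq_one_iff_unique]
    constructor
    · exact ⟨fun A B => Subtype.ext (funext fun i => i.elim0)⟩
    · exact ⟨⟨fun i => i.elim0, fun i => i.elim0⟩⟩
  have hrec := recurrence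
  have h1 : numLabeledDAGs 1 = 1 := by
    have := hrec 1 le_rfl
    rw [show Finset.Icc 1 1 = {1} by rfl, Finset.sum_singleton] at this
    simp [h0] at this
    exact_mod_cast this
  have h2 : numLabeledDAGs 2 = 3 := by
    have := hrec 2 (by norm_num)
    rw [show Finset.Icc 1 2 = {1, 2} by rfl, Finset.sum_insert (by decide),
      Finset.sum_singleton] at this
    norm_num [h0, h1] at this
    exact_mod_cast this
  have h3 : numLabeledDAGs 3 = 25 := by
    have := hrec 3 (by norm_num)
    rw [show Finset.Icc 1 3 = {1, 2, 3} by rfl, Finset.sum_insert (by decide),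
      Finset.sum_insert (by decide), Finset.sum_singleton] at this
    norm_num [h0, h1, h2] at this
    exact_mod_cast this
  exact ⟨h0, hrec, h1, h2, h3⟩
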